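/- Fix n ≥ 2, 0 < ε ≤ 1/32, and i ∈ {1,...,n}. Let a = (n-i)/(4n). If rⁱ⁺¹ = (n-i)/(4n), then max{(1/2 + a)·(1/(2n)) + rⁱ⁺¹·(1 - 1/(2n)), (1/4 + a)·(1/n - 16ε/n) + rⁱ⁺¹·(1 - 1/n + 16ε/n)} = (n+1-i)/(4n), and also max{(1/2 + a)·(1/(2n) - 8ε/n) + rⁱ⁺¹·(1 - 1/(2n) + 8ε/n), (1/4 + a)·(1/n) + rⁱ⁺¹·(1 - 1/n)} = (n+1-i)/(4n). -/
import Mathlib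


theorem stmt_7 (n : ℕ) (hn : 2 ≤ n) (ε : ℝ) (hε : 0 < ε) (hε' : ε ≤ 1 / 32)
    (i : ℕ) (hi : i ∈ Finset.Icc 1 n) (a r : ℝ)
    (ha : a = ((n : ℝ) - i) / (4 * n)) (hr : r = ((n : ℝ) - i) / (4 * n)) :
    max ((1 / 2 + a) * (1 / (2 * (n : ℝ))) + r * (1 - 1 / (2 * (n : ℝ))))
        ((1 / 4 + a) * (1 / (n : ℝ) - 16 * ε / n) + r * (1 - 1 / (n : ℝ) + 16 * ε / n))
      = ((n : ℝ) + 1 - i) / (4 * n) ∧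
    max ((1 / 2 + a) * (1 / (2 * (n : ℝ)) - 8 * ε / n) + r * (1 - 1 / (2 * (n : ℝ)) + 8 * ε / n))
        ((1 / 4 + a) * (1 / (n : ℝ)) + r * (1 - 1 / (n : ℝ)))
      = ((n : ℝ) + 1 - i) / (4 * n) := by
  have hnpos : (0 : ℝ) < n := by positivity
  have hne : (n : ℝ) ≠ 0 := ne_of_gt hnpos
  have heps : 0 < 4 * ε / n := by positivity
  subst ha hr
  constructor
  · rw [max_eq_left]
    · field_simp; ring
    · have : (1 / 4 + ((n : ℝ) - i) / (4 * n)) * (1 / (n : ℝ) - 16 * ε / n) +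
          ((n : ℝ) - i) / (4 * n) * (1 - 1 / (n : ℝ) + 16 * ε / n) =
          (1 / 2 + ((n : ℝ) - i) / (4 * n)) * (1 / (2 * (n : ℝ))) +
          ((n : ℝ) - i) / (4 * n) * (1 - 1 / (2 * (n : ℝ))) - 4 * ε / n := by
        field_simp; ring
      linarith
  · rw [max_eq_right]
    · field_simp; ring
    · have : (1 / 2 + ((n : ℝ) - i) / (4 * n)) * (1 / (2 * (n : ℝ)) - 8 * ε / n) +
          ((n : ℝ) - i) / (4 * n) * (1 - 1 / (2 * (n : ℝ)) + 8 * ε / n) =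
          (1 / 4 + ((n : ℝ) - i) / (4 * n)) * (1 / (n : ℝ)) +
          ((n : ℝ) - i) / (4 * n) * (1 - 1 / (n : ℝ)) - 4 * ε / n := by
        field_simp; ring
      linarith
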